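/- Let Ω be a domain in ℂ that is convex in the positive direction and contained in a horizontal strip, and let h be a Koenigs map onto Ω. Then for every λ ∈ ℂ with λ ≠ 0 one has D(e^{λh}) < ∞ if and only if Re λ < 0 and ∫_{-∞}^0 e^{2 Re λ · x} ℓ_Ω(x) dx < ∞. (Lemma 3.7 combined with Lemma 3.4: the slice-length criterion for the nonzero point spectrum on the Dirichlet space in the hyperbolic case.) -/

import Mathlib

open MeasureTheory Set Complex Metric
open scoped ENNReal NNReal

noncomputable section

/-- The Dirichlet integral `D(f) = ∫_𝔻 |f'(z)|² dA(z)` over the unit disk. -/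
def dirichletIntegral (f : ℂ → ℂ) : ℝ≥0∞ :=
  ∫⁻ z in ball (0 : ℂ) 1, (‖deriv f z‖₊ : ℝ≥0∞) ^ 2

/-- `h` is a Koenigs map onto `Ω`: an injective holomorphic map on the unit disk with image `Ω`. -/
def IsKoenigsMap (h : ℂ → ℂ) (Ω : Set ℂ) : Prop :=
  DifferentiableOn ℂ h (ball 0 1) ∧ InjOn h (ball 0 1) ∧ h '' ball 0 1 = Ω

/-- `Ω` is convex in the positive direction: `Ω + t ⊆ Ω` for all `t ≥ 0`. -/
def ConvexPosDir (Ω : Set ℂ) : Prop :=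
  ∀ t : ℝ, 0 ≤ t → ∀ w ∈ Ω, w + (t : ℂ) ∈ Ω

/-- `ℓ_Ω(x)`: one-dimensional Lebesgue measure of the vertical slice `{y : x + iy ∈ Ω}`. -/
def sliceLen (Ω : Set ℂ) (x : ℝ) : ℝ≥0∞ :=
  volume {y : ℝ | (x : ℂ) + (y : ℂ) * Complex.I ∈ Ω}

/-! ### Auxiliary lemmas -/

lemma aux_det_mul_c (c : ℂ) :
    (((1 : ℂ →L[ℂ] ℂ).smulRight c).restrictScalars ℝ).det = Complex.normSq c := by
  have : ((((1 : ℂ →L[ℂ] ℂ).smulRight c).restrictScalars ℝ) : ℂ →ₗ[ℝ] ℂ) = Algebra.lmul ℝ ℂ c := by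
    ext z; simp [mul_comm]
  rw [ContinuousLinearMap.det, this, ← Algebra.norm_apply, Algebra.norm_complex_apply]

/-- Change of variables for an injective holomorphic map on the disk. -/
lemma aux_cov (h : ℂ → ℂ) (hd : DifferentiableOn ℂ h (ball 0 1)) (hinj : InjOn h (ball 0 1))
    (G : ℂ → ℝ≥0∞) :
    ∫⁻ w in h '' ball 0 1, G w
      = ∫⁻ z in ball (0:ℂ) 1, ENNReal.ofReal (Complex.normSq (deriv h z)) * G (h z) := by
  have key := lintegral_image_eq_lintegral_abs_det_fderiv_mul (volume : Measure ℂ)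
    (measurableSet_ball (x := (0:ℂ)) (ε := 1))
    (f' := fun z => ((1 : ℂ →L[ℂ] ℂ).smulRight (deriv h z)).restrictScalars ℝ)
    (f := h) ?_ hinj G
  · rw [key]
    refine setLIntegral_congr_fun measurableSet_ball (fun z hz => ?_)
    rw [aux_det_mul_c, _root_.abs_of_nonneg (Complex.normSq_nonneg _)]
  · intro z hz
    have hda : DifferentiableAt ℂ h z := hd.differentiableAt (isOpen_ball.mem_nhds hz)
    exact ((hda.hasDerivAt.hasFDerivAt).restrictScalars ℝ).hasFDerivWithinAt

/-- Fubini: integrating a function of the real part over `Ω` via vertical slices. -/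
lemma aux_fubini (Ω : Set ℂ) (hΩ : MeasurableSet Ω) (c : ℝ) :
    ∫⁻ w in Ω, ENNReal.ofReal (Real.exp (2 * c * w.re))
      = ∫⁻ x : ℝ, ENNReal.ofReal (Real.exp (2 * c * x)) * sliceLen Ω x := by
  set f : ℂ → ℝ≥0∞ := fun w => ENNReal.ofReal (Real.exp (2 * c * w.re)) with hfdef
  have hf : Measurable f :=
    ENNReal.measurable_ofReal.comp
      ((Real.continuous_exp.comp (continuous_const.mul Complex.continuous_re)).measurable)
  rw [← lintegral_indicator hΩ]
  have hmp : MeasurePreserving Complex.measurableEquivRealProd volume volume :=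
    Complex.volume_preserving_equiv_real_prod
  have step1 : ∫⁻ z : ℂ, Ω.indicator f z
      = ∫⁻ p : ℝ × ℝ, Ω.indicator f (Complex.measurableEquivRealProd.symm p) := by
    rw [← hmp.lintegral_comp_emb Complex.measurableEquivRealProd.measurableEmbedding]
    simp
  rw [step1]
  have hmeas : Measurable fun p : ℝ × ℝ =>
      Ω.indicator f (Complex.measurableEquivRealProd.symm p) :=
    (hf.indicator hΩ).comp Complex.measurableEquivRealProd.symm.measurable
  rw [MeasureTheory.Measure.volume_eq_prod, MeasureTheory.lintegral_prod _ hmeas.aemeasurable]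
  congr 1
  ext x
  have hsymm : ∀ y : ℝ,
      Complex.measurableEquivRealProd.symm (x, y) = (x : ℂ) + (y : ℂ) * Complex.I := by
    intro y
    apply Complex.ext <;> simp [Complex.measurableEquivRealProd]
  have hslice : MeasurableSet {y : ℝ | (x : ℂ) + (y : ℂ) * Complex.I ∈ Ω} :=
    hΩ.preimage ((continuous_const.add (Complex.continuous_ofReal.mul continuous_const)).measurable)
  calc ∫⁻ y, Ω.indicator f (Complex.measurableEquivRealProd.symm (x, y))
      = ∫⁻ y, ({y : ℝ | (x : ℂ) + (y : ℂ) * Complex.I ∈ Ω}).indicator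
          (fun _ => ENNReal.ofReal (Real.exp (2 * c * x))) y := by
        congr 1; ext y
        rw [hsymm y]
        by_cases hy : (x : ℂ) + (y : ℂ) * Complex.I ∈ Ω
        · simp [Set.indicator, hy, hfdef]
        · simp [Set.indicator, hy]
    _ = ENNReal.ofReal (Real.exp (2 * c * x)) * sliceLen Ω x := by
        rw [lintegral_indicator hslice, setLIntegral_const, sliceLen]

lemma aux_nnnorm_sq (w : ℂ) : (‖w‖₊ : ℝ≥0∞) ^ 2 = ENNReal.ofReal (Complex.normSq w) := by
  rw [Complex.normSq_eq_norm_sq, ENNReal.ofReal_pow (norm_nonneg w),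
    ← coe_nnnorm, ENNReal.ofReal_coe_nnreal]

lemma aux_normSq_exp (w : ℂ) : Complex.normSq (Complex.exp w) = Real.exp (2 * w.re) := by
  rw [Complex.normSq_eq_norm_sq, Complex.norm_exp, two_mul, Real.exp_add, sq]

/-- **Lemmas 3.4 & 3.7.** For the Koenigs map `h` of a hyperbolic semigroup with Koenigs domain
`Ω` (convex in the positive direction, contained in a horizontal strip), a nonzero `λ` satisfies
`D(e^{λh}) < ∞` iff `Re λ < 0` and `∫_{-∞}^0 e^{2 Re λ · x} ℓ_Ω(x) dx < ∞`. -/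
theorem dirichlet_spectrum_slice_length_criterion
    (Ω : Set ℂ) (hopen : IsOpen Ω) (hconn : IsConnected Ω)
    (hconv : ConvexPosDir Ω)
    (hstrip : ∃ a b : ℝ, Ω ⊆ {w : ℂ | a < w.im ∧ w.im < b})
    (h : ℂ → ℂ) (hKoenigs : IsKoenigsMap h Ω)
    (lam : ℂ) (hlam : lam ≠ 0) :
    dirichletIntegral (fun z => Complex.exp (lam * h z)) < ⊤ ↔
      (lam.re < 0 ∧
        ∫⁻ x in Iio (0 : ℝ),
          ENNReal.ofReal (Real.exp (2 * lam.re * x)) * sliceLen Ω x < ⊤) := by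
  obtain ⟨hd, hinj, himg⟩ := hKoenigs
  obtain ⟨a, b, hab⟩ := hstrip
  obtain ⟨w₀, hw₀⟩ := hconn.nonempty
  obtain ⟨r, hr, hball⟩ := Metric.isOpen_iff.1 hopen w₀ hw₀
  have hΩm : MeasurableSet Ω := hopen.measurableSet
  set c : ℝ := lam.re with hc
  set φ : ℝ → ℝ≥0∞ := fun x => ENNReal.ofReal (Real.exp (2 * c * x)) * sliceLen Ω x with hφ
  -- the derivative of e^{λ h}
  have hderiv : ∀ z ∈ ball (0:ℂ) 1, deriv (fun z => Complex.exp (lam * h z)) z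
      = Complex.exp (lam * h z) * (lam * deriv h z) := by
    intro z hz
    have hda : DifferentiableAt ℂ h z := hd.differentiableAt (isOpen_ball.mem_nhds hz)
    exact ((hda.hasDerivAt.const_mul lam).cexp).deriv
  set F : ℂ → ℝ≥0∞ := fun w => ENNReal.ofReal (Real.exp (2 * (lam * w).re)) with hF
  set Fc : ℂ → ℝ≥0∞ := fun w => ENNReal.ofReal (Real.exp (2 * c * w.re)) with hFc
  -- change of variables
  have hcov : ∫⁻ w in Ω, F w
      = ∫⁻ z in ball (0:ℂ) 1, ENNReal.ofReal (Complex.normSq (deriv h z)) * F (h z) := by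
    rw [← himg]; exact aux_cov h hd hinj F
  have hpt : ∀ z ∈ ball (0:ℂ) 1,
      (‖lam‖₊ : ℝ≥0∞) ^ 2 * (ENNReal.ofReal (Complex.normSq (deriv h z)) * F (h z))
        = (‖deriv (fun z => Complex.exp (lam * h z)) z‖₊ : ℝ≥0∞) ^ 2 := by
    intro z hz
    rw [hderiv z hz, aux_nnnorm_sq, aux_nnnorm_sq, hF]
    rw [← ENNReal.ofReal_mul (Complex.normSq_nonneg _),
      ← ENNReal.ofReal_mul (Complex.normSq_nonneg _)]
    congr 1
    rw [Complex.normSq_mul, Complex.normSq_mul, aux_normSq_exp]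
    ring
  have hD : dirichletIntegral (fun z => Complex.exp (lam * h z))
      = (‖lam‖₊ : ℝ≥0∞) ^ 2 * ∫⁻ w in Ω, F w := by
    rw [hcov, ← lintegral_const_mul' _ _ (by simp : ((‖lam‖₊ : ℝ≥0∞) ^ 2 ≠ ⊤)),
      dirichletIntegral]
    exact (setLIntegral_congr_fun measurableSet_ball hpt).symm
  have hk0 : ((‖lam‖₊ : ℝ≥0∞) ^ 2) ≠ 0 := by simp [hlam]
  have hktop : ((‖lam‖₊ : ℝ≥0∞) ^ 2) ≠ ⊤ := by simp
  have hiff1 : dirichletIntegral (fun z => Complex.exp (lam * h z)) < ⊤ ↔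
      (∫⁻ w in Ω, F w) < ⊤ := by
    rw [hD, ENNReal.mul_lt_top_iff]
    constructor
    · rintro (⟨-, hI⟩ | hk | hI)
      · exact hI
      · exact absurd hk hk0
      · simp [hI]
    · intro hI
      exact Or.inl ⟨lt_of_le_of_ne le_top hktop, hI⟩
  -- strip comparison
  set M : ℝ := |lam.im| * max |a| |b| with hM
  set C : ℝ≥0∞ := ENNReal.ofReal (Real.exp (2 * M)) with hC
  have hCtop : C ≠ ⊤ := ENNReal.ofReal_ne_top
  have him_bdd : ∀ w ∈ Ω, |lam.im * w.im| ≤ M := by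
    intro w hw
    obtain ⟨h1, h2⟩ := hab hw
    have : |w.im| ≤ max |a| |b| := abs_le_max_abs_abs h1.le h2.le
    rw [abs_mul, hM]
    exact mul_le_mul_of_nonneg_left this (abs_nonneg _)
  have claim1 : ∀ w ∈ Ω, F w ≤ C * Fc w := by
    intro w hw
    have hb := him_bdd w hw
    have hre : (lam * w).re = c * w.re - lam.im * w.im := by
      rw [Complex.mul_re, hc]
    have : 2 * (lam * w).re ≤ 2 * M + 2 * c * w.re := by
      have := neg_abs_le (lam.im * w.im)
      rw [hre]; nlinarith
    calc F w ≤ ENNReal.ofReal (Real.exp (2 * M + 2 * c * w.re)) :=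
          ENNReal.ofReal_le_ofReal (Real.exp_le_exp.2 this)
      _ = C * Fc w := by
          rw [Real.exp_add, ENNReal.ofReal_mul (Real.exp_nonneg _)]
  have claim2 : ∀ w ∈ Ω, Fc w ≤ C * F w := by
    intro w hw
    have hb := him_bdd w hw
    have hre : (lam * w).re = c * w.re - lam.im * w.im := by
      rw [Complex.mul_re, hc]
    have : 2 * c * w.re ≤ 2 * M + 2 * (lam * w).re := by
      have := le_abs_self (lam.im * w.im)
      rw [hre]; nlinarith
    calc Fc w ≤ ENNReal.ofReal (Real.exp (2 * M + 2 * (lam * w).re)) :=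
          ENNReal.ofReal_le_ofReal (Real.exp_le_exp.2 this)
      _ = C * F w := by
          rw [Real.exp_add, ENNReal.ofReal_mul (Real.exp_nonneg _)]
  have hIJ : (∫⁻ w in Ω, F w) ≤ C * ∫⁻ w in Ω, Fc w := by
    calc (∫⁻ w in Ω, F w) ≤ ∫⁻ w in Ω, C * Fc w := setLIntegral_mono' hΩm claim1
      _ = C * ∫⁻ w in Ω, Fc w := lintegral_const_mul' _ _ hCtop
  have hJI : (∫⁻ w in Ω, Fc w) ≤ C * ∫⁻ w in Ω, F w := by
    calc (∫⁻ w in Ω, Fc w) ≤ ∫⁻ w in Ω, C * F w := setLIntegral_mono' hΩm claim2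
      _ = C * ∫⁻ w in Ω, F w := lintegral_const_mul' _ _ hCtop
  have hiff2 : (∫⁻ w in Ω, F w) < ⊤ ↔ (∫⁻ w in Ω, Fc w) < ⊤ := by
    constructor
    · intro hI
      exact lt_of_le_of_lt hJI (ENNReal.mul_lt_top (lt_of_le_of_ne le_top hCtop) hI)
    · intro hJ
      exact lt_of_le_of_lt hIJ (ENNReal.mul_lt_top (lt_of_le_of_ne le_top hCtop) hJ)
  -- Fubini and splitting
  have hfub : (∫⁻ w in Ω, Fc w) = ∫⁻ x : ℝ, φ x := aux_fubini Ω hΩm c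
  have hsplit : (∫⁻ x : ℝ, φ x) = (∫⁻ x in Iio (0:ℝ), φ x) + ∫⁻ x in Ici (0:ℝ), φ x := by
    rw [← lintegral_add_compl φ (measurableSet_Iio (a := (0:ℝ))), compl_Iio]
  -- upper bound on slices
  have hub : ∀ x : ℝ, sliceLen Ω x ≤ ENNReal.ofReal (b - a) := by
    intro x
    have hsub : {y : ℝ | (x : ℂ) + (y : ℂ) * Complex.I ∈ Ω} ⊆ Ioo a b := by
      intro y hy
      have := hab hy
      simpa using this
    calc sliceLen Ω x ≤ volume (Ioo a b) := measure_mono hsub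
      _ = ENNReal.ofReal (b - a) := Real.volume_Ioo
  -- finiteness of the right tail when Re λ < 0
  have hIcifin : c < 0 → (∫⁻ x in Ici (0:ℝ), φ x) < ⊤ := by
    intro hc0
    have hint : IntegrableOn (fun x => Real.exp (2 * c * x)) (Ioi (0:ℝ)) := by
      have := exp_neg_integrableOn_Ioi 0 (show (0:ℝ) < -(2 * c) by linarith)
      simpa [neg_neg] using this
    have hfin' : (∫⁻ x in Ioi (0:ℝ), ENNReal.ofReal (Real.exp (2 * c * x))) < ⊤ := by
      have h2 := hint.2
      rwa [hasFiniteIntegral_iff_ofReal (ae_of_all _ fun x => Real.exp_nonneg _)] at h2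
    have hIcieq : (∫⁻ x in Ici (0:ℝ), ENNReal.ofReal (Real.exp (2 * c * x)))
        = ∫⁻ x in Ioi (0:ℝ), ENNReal.ofReal (Real.exp (2 * c * x)) :=
      (setLIntegral_congr (Ioi_ae_eq_Ici (a := (0:ℝ)))).symm
    calc (∫⁻ x in Ici (0:ℝ), φ x)
        ≤ ∫⁻ x in Ici (0:ℝ), ENNReal.ofReal (Real.exp (2 * c * x)) * ENNReal.ofReal (b - a) :=
          setLIntegral_mono' measurableSet_Ici fun x _ => mul_le_mul_of_nonneg_left (hub x) zero_le
      _ = (∫⁻ x in Ici (0:ℝ), ENNReal.ofReal (Real.exp (2 * c * x))) * ENNReal.ofReal (b - a) :=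
          lintegral_mul_const' _ _ ENNReal.ofReal_ne_top
      _ < ⊤ := ENNReal.mul_lt_top (by rw [hIcieq]; exact hfin')
            (lt_of_le_of_ne le_top ENNReal.ofReal_ne_top)
  -- divergence of the right tail when Re λ ≥ 0
  have hlow : ∀ x : ℝ, w₀.re ≤ x → ENNReal.ofReal (2 * r) ≤ sliceLen Ω x := by
    intro x hx
    have hsub : Ioo (w₀.im - r) (w₀.im + r) ⊆ {y : ℝ | (x : ℂ) + (y : ℂ) * Complex.I ∈ Ω} := by
      intro y hy
      obtain ⟨hy1, hy2⟩ := hy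
      have hq : w₀ + ((y - w₀.im : ℝ) : ℂ) * Complex.I ∈ ball w₀ r := by
        rw [mem_ball, dist_eq_norm]
        have : w₀ + ((y - w₀.im : ℝ) : ℂ) * Complex.I - w₀ = ((y - w₀.im : ℝ) : ℂ) * Complex.I := by
          ring
        rw [this, norm_mul, Complex.norm_real, Real.norm_eq_abs,
          Complex.norm_I, mul_one]
        rw [abs_sub_lt_iff]
        constructor <;> linarith
      have hmem := hconv (x - w₀.re) (by linarith) _ (hball hq)
      have heq : w₀ + ((y - w₀.im : ℝ) : ℂ) * Complex.I + ((x - w₀.re : ℝ) : ℂ)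
          = (x : ℂ) + (y : ℂ) * Complex.I := by
        apply Complex.ext <;> simp
      rwa [heq] at hmem
    calc ENNReal.ofReal (2 * r) = volume (Ioo (w₀.im - r) (w₀.im + r)) := by
          rw [Real.volume_Ioo]; ring_nf
      _ ≤ sliceLen Ω x := measure_mono hsub
  have hIcitop : 0 ≤ c → (∫⁻ x in Ici (0:ℝ), φ x) = ⊤ := by
    intro hc0
    set x₁ : ℝ := max 0 w₀.re with hx₁
    have hgt : ∀ x ∈ Ici x₁, ENNReal.ofReal (2 * r) ≤ φ x := by
      intro x hx
      have hx0 : (0:ℝ) ≤ x := le_trans (le_max_left _ _) hx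
      have hxw : w₀.re ≤ x := le_trans (le_max_right _ _) hx
      have h1 : (1 : ℝ≥0∞) ≤ ENNReal.ofReal (Real.exp (2 * c * x)) := by
        rw [show (1:ℝ≥0∞) = ENNReal.ofReal 1 by simp]
        refine ENNReal.ofReal_le_ofReal ?_
        rw [show (1:ℝ) = Real.exp 0 by simp]
        exact Real.exp_le_exp.2 (by positivity)
      calc ENNReal.ofReal (2 * r) = 1 * ENNReal.ofReal (2 * r) := (one_mul _).symm
        _ ≤ ENNReal.ofReal (Real.exp (2 * c * x)) * sliceLen Ω x :=
            mul_le_mul' h1 (hlow x hxw)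
    have hbig : (∫⁻ x in Ici x₁, φ x) = ⊤ := by
      have hle : (∫⁻ x in Ici x₁, ENNReal.ofReal (2 * r)) ≤ ∫⁻ x in Ici x₁, φ x :=
        setLIntegral_mono' measurableSet_Ici hgt
      have : (∫⁻ _ in Ici x₁, ENNReal.ofReal (2 * r)) = ⊤ := by
        rw [setLIntegral_const, Real.volume_Ici, ENNReal.mul_top]
        simpa using (by positivity : (0:ℝ) < 2 * r)
      exact top_le_iff.1 (this ▸ hle)
    have hsubset : Ici x₁ ⊆ Ici (0:ℝ) := Ici_subset_Ici.2 (le_max_left _ _)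
    exact top_le_iff.1 (hbig ▸ lintegral_mono_set hsubset)
  -- assemble
  rw [hiff1, hiff2, hfub, hsplit]
  constructor
  · intro hfin
    have hcneg : c < 0 := by
      by_contra hge
      push_neg at hge
      rw [hIcitop hge] at hfin
      simp at hfin
    exact ⟨hcneg, lt_of_le_of_lt le_self_add hfin⟩
  · rintro ⟨hcneg, hIio⟩
    exact ENNReal.add_lt_top.2 ⟨hIio, hIcifin hcneg⟩
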